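/- Let ρ ∈ M₊([0,1]×Ω) and ρ₀, ρ₁ ∈ M₊(Ω). Define A_{ρ₀,ρ₁}(ρ) := inf{𝒜(ρ,m) : m ∈ M([0,1]×Ω;ℝ^d) with (ρ,m) ∈ CE(ρ₀,ρ₁)} ∈ [0,+∞] (with inf ∅ = +∞). Then A_{ρ₀,ρ₁}(ρ) equals the supremum, over all C¹ functions φ on [0,1]×Ω, of ⟨ρ₁, φ(1,·)⟩ − ⟨ρ₀, φ(0,·)⟩ − ⟨⟨ρ, ∂ₜφ + (1/2)|∇ₓφ|²⟩⟩. -/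

import Mathlib

open MeasureTheory Set Filter Topology
open scoped ENNReal NNReal

noncomputable section

abbrev Euc (d : ℕ) : Type := EuclideanSpace ℝ (Fin d)

/-- Integral of a function against a finite signed measure. -/
def sInt {X : Type*} [MeasurableSpace X] (ν : SignedMeasure X) (f : X → ℝ) : ℝ :=
  (∫ x, f x ∂ν.toJordanDecomposition.posPart) - ∫ x, f x ∂ν.toJordanDecomposition.negPart

/-- Total variation norm of a finite signed measure. -/
def sTV {X : Type*} [MeasurableSpace X] (ν : SignedMeasure X) : ℝ :=
  (ν.totalVariation Set.univ).toReal

/-- Pairing of an `ℝ^d`-valued measure (given componentwise) with a vector field. -/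
def vInt {X : Type*} [MeasurableSpace X] {d : ℕ} (m : Fin d → SignedMeasure X)
    (b : X → Euc d) : ℝ :=
  ∑ i, sInt (m i) fun x => b x i

/-- Total variation norm of a vector measure, via duality with continuous fields. -/
def vTV {X : Type*} [MeasurableSpace X] [TopologicalSpace X] {d : ℕ}
    (m : Fin d → SignedMeasure X) : ℝ :=
  ⨆ b : {b : C(X, Euc d) // ∀ x, ‖b x‖ ≤ 1}, vInt m fun x => (b : C(X, Euc d)) x

/-- The Benamou-Brenier action. -/
def actionBB {X : Type*} [MeasurableSpace X] [TopologicalSpace X] {d : ℕ}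
    (ρ : SignedMeasure X) (m : Fin d → SignedMeasure X) : ℝ≥0∞ :=
  ⨆ p : {q : C(X, ℝ) × C(X, Euc d) // ∀ x, q.1 x + ‖q.2 x‖ ^ 2 / 2 ≤ 0},
    ENNReal.ofReal (sInt ρ (p : C(X, ℝ) × C(X, Euc d)).1 + vInt m (p : C(X, ℝ) × C(X, Euc d)).2)

/-- The space-time domain `[0,1] × Ω`. -/
abbrev STt (d : ℕ) (Ω : Set (Euc d)) : Type := ↥(Icc (0:ℝ) 1) × ↥Ω

def STemb {d : ℕ} {Ω : Set (Euc d)} (p : STt d Ω) : ℝ × Euc d := ((p.1 : ℝ), (p.2 : Euc d))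

/-- The (weak formulation of the) continuity equation with temporal boundary data `ρ₀, ρ₁`. -/
def CEeq (d : ℕ) (Ω : Set (Euc d)) (ρ₀ ρ₁ : SignedMeasure ↥Ω)
    (ρ : SignedMeasure (STt d Ω)) (m : Fin d → SignedMeasure (STt d Ω)) : Prop :=
  ∀ φ : ℝ × Euc d → ℝ, ContDiff ℝ 1 φ →
    sInt ρ (fun p => fderiv ℝ φ (STemb p) (1, 0)) +
      ∑ i, sInt (m i) (fun p => fderiv ℝ φ (STemb p) (0, EuclideanSpace.single i 1)) =
    sInt ρ₁ (fun x => φ (1, (x : Euc d))) - sInt ρ₀ (fun x => φ (0, (x : Euc d)))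

open scoped Classical in
/-- The functional `J_{ρ₀,ρ₁}`. -/
def Jfun (d : ℕ) (Ω : Set (Euc d)) (ρ₀ ρ₁ : SignedMeasure ↥Ω)
    (ρ : SignedMeasure (STt d Ω)) (m : Fin d → SignedMeasure (STt d Ω)) : ℝ≥0∞ :=
  if CEeq d Ω ρ₀ ρ₁ ρ m then actionBB ρ m else ⊤

/-- The quadratic Wasserstein distance. -/
def W2 {d : ℕ} {Ω : Set (Euc d)} (μ ν : Measure ↥Ω) : ℝ :=
  Real.sqrt (sInf {c : ℝ | ∃ π : Measure (↥Ω × ↥Ω), IsFiniteMeasure π ∧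
    π.map Prod.fst = μ ∧ π.map Prod.snd = ν ∧
    c = ∫ p, ‖(p.1 : Euc d) - (p.2 : Euc d)‖ ^ 2 ∂π})


/-! ### Auxiliary lemmas -/

section aux
lemma sInt_sub_singular {X : Type*} [MeasurableSpace X] (μ ν : Measure X) [IsFiniteMeasure μ]
    [IsFiniteMeasure ν] (h : μ ⟂ₘ ν) (f : X → ℝ) :
    sInt (μ.toSignedMeasure - ν.toSignedMeasure) f = (∫ x, f x ∂μ) - ∫ x, f x ∂ν := by
  have hj : (μ.toSignedMeasure - ν.toSignedMeasure).toJordanDecomposition = ⟨μ, ν, h⟩ := by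
    apply MeasureTheory.SignedMeasure.toJordanDecomposition_eq
    rfl
  rw [sInt, hj]

lemma sInt_toSignedMeasure {X : Type*} [MeasurableSpace X] (μ : Measure X) [IsFiniteMeasure μ]
    (f : X → ℝ) : sInt μ.toSignedMeasure f = ∫ x, f x ∂μ := by
  have h : μ.toSignedMeasure = μ.toSignedMeasure - (0 : Measure X).toSignedMeasure := by
    simp [MeasureTheory.Measure.toSignedMeasure_zero]
  rw [h, sInt_sub_singular μ 0 (MeasureTheory.Measure.MutuallySingular.zero_right) f]
  simp

lemma cont_memL2 {X : Type*} [MeasurableSpace X] [TopologicalSpace X] [CompactSpace X]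
    [OpensMeasurableSpace X] [SecondCountableTopology X] (μ : Measure X) [IsFiniteMeasure μ]
    {E : Type*} [NormedAddCommGroup E] [TopologicalSpace.PseudoMetrizableSpace E]
    {f : X → E} (hf : Continuous f) (p : ENNReal) : MemLp f p μ := by
  obtain ⟨C, hC⟩ := isCompact_univ.exists_bound_of_continuousOn hf.continuousOn
  exact (memLp_top_of_bound hf.aestronglyMeasurable C
    (Filter.Eventually.of_forall fun x => hC x trivial)).mono_exponent le_top

lemma cont_integrable {X : Type*} [MeasurableSpace X] [TopologicalSpace X] [CompactSpace X]
    [OpensMeasurableSpace X] [SecondCountableTopology X] (μ : Measure X) [IsFiniteMeasure μ]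
    {E : Type*} [NormedAddCommGroup E] [TopologicalSpace.PseudoMetrizableSpace E]
    {f : X → E} (hf : Continuous f) : Integrable f μ :=
  (cont_memL2 μ hf 2).integrable one_le_two

section grad
variable {d : ℕ} {Ω : Set (Euc d)}

lemma continuous_STemb : Continuous (STemb (d := d) (Ω := Ω)) :=
  (continuous_subtype_val.comp continuous_fst).prodMk
    (continuous_subtype_val.comp continuous_snd)

def dtFn (φ : ℝ × Euc d → ℝ) (p : STt d Ω) : ℝ := fderiv ℝ φ (STemb p) (1, 0)

def gradFn (φ : ℝ × Euc d → ℝ) (p : STt d Ω) : Euc d :=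
  (WithLp.equiv 2 (Fin d → ℝ)).symm fun i => fderiv ℝ φ (STemb p) (0, EuclideanSpace.single i 1)

lemma gradFn_apply (φ : ℝ × Euc d → ℝ) (p : STt d Ω) (i : Fin d) :
    gradFn φ p i = fderiv ℝ φ (STemb p) (0, EuclideanSpace.single i 1) := rfl

lemma cont_dtFn {φ : ℝ × Euc d → ℝ} (hφ : ContDiff ℝ 1 φ) :
    Continuous (dtFn (Ω := Ω) φ) := by
  have h1 : Continuous (fderiv ℝ φ) := hφ.continuous_fderiv one_ne_zero
  exact (h1.comp continuous_STemb).clm_apply continuous_const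

lemma cont_gradFn {φ : ℝ × Euc d → ℝ} (hφ : ContDiff ℝ 1 φ) :
    Continuous (gradFn (Ω := Ω) φ) := by
  have h1 : Continuous (fderiv ℝ φ) := hφ.continuous_fderiv one_ne_zero
  refine (PiLp.continuous_toLp 2 (fun _ : Fin d => ℝ)).comp ?_
  exact continuous_pi fun i => ((h1.comp continuous_STemb).clm_apply continuous_const)

lemma norm_gradFn_sq (φ : ℝ × Euc d → ℝ) (p : STt d Ω) :
    ‖gradFn φ p‖ ^ 2 = ∑ i, (fderiv ℝ φ (STemb p) (0, EuclideanSpace.single i 1)) ^ 2 := by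
  rw [EuclideanSpace.norm_eq, Real.sq_sqrt (by positivity)]
  simp [gradFn_apply, sq_abs]

end grad
end aux

section weak
variable {d : ℕ} {Ω : Set (Euc d)}

lemma weak_dir [CompactSpace ↥Ω] (ρ : Measure (STt d Ω)) [IsFiniteMeasure ρ]
    (ρ₀ ρ₁ : Measure ↥Ω) [IsFiniteMeasure ρ₀] [IsFiniteMeasure ρ₁]
    (φ : ℝ × Euc d → ℝ) (hφ : ContDiff ℝ 1 φ) (m : Fin d → SignedMeasure (STt d Ω))
    (hm : CEeq d Ω ρ₀.toSignedMeasure ρ₁.toSignedMeasure ρ.toSignedMeasure m) :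
    ENNReal.ofReal ((∫ x, φ (1, (x : Euc d)) ∂ρ₁) - (∫ x, φ (0, (x : Euc d)) ∂ρ₀) -
        ∫ p, (fderiv ℝ φ (STemb p) (1, 0) +
          (∑ i, (fderiv ℝ φ (STemb p) (0, EuclideanSpace.single i 1)) ^ 2) / 2) ∂ρ) ≤
      actionBB ρ.toSignedMeasure m := by
  set X := STt d Ω
  have hsum : Continuous (fun p : X =>
      ∑ i, (fderiv ℝ φ (STemb p) (0, EuclideanSpace.single i 1)) ^ 2) := by
    have h1 : Continuous (fderiv ℝ φ) := hφ.continuous_fderiv one_ne_zero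
    exact continuous_finset_sum _ fun i _ =>
      ((h1.comp continuous_STemb).clm_apply continuous_const).pow 2
  set a : C(X, ℝ) := ⟨fun p =>
      -((∑ i, (fderiv ℝ φ (STemb p) (0, EuclideanSpace.single i 1)) ^ 2) / 2),
    ((hsum.div_const 2).neg)⟩ with ha
  set b : C(X, Euc d) := ⟨gradFn φ, cont_gradFn hφ⟩ with hb
  have hpair : ∀ x, (a, b).1 x + ‖(a, b).2 x‖ ^ 2 / 2 ≤ 0 := by
    intro x
    simp only [ha, hb, ContinuousMap.coe_mk, norm_gradFn_sq]
    linarith [sq_nonneg (0:ℝ)]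
  refine le_iSup_of_le ⟨(a, b), hpair⟩ (le_of_eq ?_)
  congr 1
  have hint_dt : Integrable (fun p : X => fderiv ℝ φ (STemb p) (1, 0)) ρ :=
    cont_integrable ρ (cont_dtFn hφ)
  have hint_sum : Integrable (fun p : X =>
      ∑ i, (fderiv ℝ φ (STemb p) (0, EuclideanSpace.single i 1)) ^ 2) ρ :=
    cont_integrable ρ hsum
  have hCE := hm φ hφ
  rw [sInt_toSignedMeasure, sInt_toSignedMeasure, sInt_toSignedMeasure] at hCE
  have hvInt : vInt m (fun x => b x) =
      ∑ i, sInt (m i) (fun p : X => fderiv ℝ φ (STemb p) (0, EuclideanSpace.single i 1)) := rfl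
  have hsInta : sInt ρ.toSignedMeasure (fun x => a x) =
      -((∫ p, (fun p : X =>
        ∑ i, (fderiv ℝ φ (STemb p) (0, EuclideanSpace.single i 1)) ^ 2) p ∂ρ) / 2) := by
    rw [sInt_toSignedMeasure]
    simp only [ha, ContinuousMap.coe_mk]
    rw [integral_neg, integral_div]
  have hsplit : ∫ p, (fderiv ℝ φ (STemb p) (1, 0) +
        (∑ i, (fderiv ℝ φ (STemb p) (0, EuclideanSpace.single i 1)) ^ 2) / 2) ∂ρ =
      (∫ p, fderiv ℝ φ (STemb p) (1, 0) ∂ρ) +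
      (∫ p, (fun p : X =>
        ∑ i, (fderiv ℝ φ (STemb p) (0, EuclideanSpace.single i 1)) ^ 2) p ∂ρ) / 2 := by
    rw [← integral_div, ← integral_add hint_dt (hint_sum.div_const 2)]
  rw [hsplit, hsInta, hvInt]
  linarith [hCE]
end weak

section lin
variable {d : ℕ} {Ω : Set (Euc d)}

lemma dtFn_sub {φ ψ : ℝ × Euc d → ℝ} (hφ : ContDiff ℝ 1 φ) (hψ : ContDiff ℝ 1 ψ) (p : STt d Ω) :
    dtFn (φ - ψ) p = dtFn φ p - dtFn ψ p := by
  have h : fderiv ℝ (φ - ψ) (STemb p) = fderiv ℝ φ (STemb p) - fderiv ℝ ψ (STemb p) :=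
    fderiv_sub (hφ.differentiable one_ne_zero _) (hψ.differentiable one_ne_zero _)
  simp [dtFn, h]

lemma dtFn_smul (c : ℝ) {φ : ℝ × Euc d → ℝ} (hφ : ContDiff ℝ 1 φ) (p : STt d Ω) :
    dtFn (c • φ) p = c * dtFn φ p := by
  have h : fderiv ℝ (c • φ) (STemb p) = c • fderiv ℝ φ (STemb p) :=
    fderiv_const_smul (hφ.differentiable one_ne_zero _) c
  simp [dtFn, h]

lemma dtFn_add {φ ψ : ℝ × Euc d → ℝ} (hφ : ContDiff ℝ 1 φ) (hψ : ContDiff ℝ 1 ψ) (p : STt d Ω) :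
    dtFn (φ + ψ) p = dtFn φ p + dtFn ψ p := by
  have h : fderiv ℝ (φ + ψ) (STemb p) = fderiv ℝ φ (STemb p) + fderiv ℝ ψ (STemb p) :=
    fderiv_add (hφ.differentiable one_ne_zero _) (hψ.differentiable one_ne_zero _)
  simp [dtFn, h]

lemma gradFn_sub {φ ψ : ℝ × Euc d → ℝ} (hφ : ContDiff ℝ 1 φ) (hψ : ContDiff ℝ 1 ψ) :
    gradFn (Ω := Ω) (φ - ψ) = gradFn φ - gradFn ψ := by
  funext p
  have h : fderiv ℝ (φ - ψ) (STemb p) = fderiv ℝ φ (STemb p) - fderiv ℝ ψ (STemb p) :=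
    fderiv_sub (hφ.differentiable one_ne_zero _) (hψ.differentiable one_ne_zero _)
  ext i
  simp [gradFn_apply, h]

lemma gradFn_add {φ ψ : ℝ × Euc d → ℝ} (hφ : ContDiff ℝ 1 φ) (hψ : ContDiff ℝ 1 ψ) :
    gradFn (Ω := Ω) (φ + ψ) = gradFn φ + gradFn ψ := by
  funext p
  have h : fderiv ℝ (φ + ψ) (STemb p) = fderiv ℝ φ (STemb p) + fderiv ℝ ψ (STemb p) :=
    fderiv_add (hφ.differentiable one_ne_zero _) (hψ.differentiable one_ne_zero _)
  ext i
  simp [gradFn_apply, h]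

lemma gradFn_smul (c : ℝ) {φ : ℝ × Euc d → ℝ} (hφ : ContDiff ℝ 1 φ) :
    gradFn (Ω := Ω) (c • φ) = c • gradFn φ := by
  funext p
  have h : fderiv ℝ (c • φ) (STemb p) = c • fderiv ℝ φ (STemb p) :=
    fderiv_const_smul (hφ.differentiable one_ne_zero _) c
  ext i
  simp [gradFn_apply, h]

lemma gradFn_zero : gradFn (Ω := Ω) (0 : ℝ × Euc d → ℝ) = 0 := by
  funext p
  ext i
  simp only [gradFn_apply]
  rw [show (0 : ℝ × Euc d → ℝ) = fun _ => (0:ℝ) from rfl, fderiv_fun_const]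
  simp

/-- The linear part of the dual objective. -/
def lfun (ρ : Measure (STt d Ω)) (ρ₀ ρ₁ : Measure ↥Ω) (φ : ℝ × Euc d → ℝ) : ℝ :=
  (∫ x, φ (1, (x : Euc d)) ∂ρ₁) - (∫ x, φ (0, (x : Euc d)) ∂ρ₀) - ∫ p, dtFn φ p ∂ρ

variable [CompactSpace ↥Ω] (ρ : Measure (STt d Ω)) [IsFiniteMeasure ρ]
  (ρ₀ ρ₁ : Measure ↥Ω) [IsFiniteMeasure ρ₀] [IsFiniteMeasure ρ₁]

lemma cont_bdry {φ : ℝ × Euc d → ℝ} (hφ : ContDiff ℝ 1 φ) (t : ℝ) :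
    Continuous fun x : ↥Ω => φ (t, (x : Euc d)) :=
  hφ.continuous.comp (continuous_const.prodMk continuous_subtype_val)

lemma lfun_sub {φ ψ : ℝ × Euc d → ℝ} (hφ : ContDiff ℝ 1 φ) (hψ : ContDiff ℝ 1 ψ) :
    lfun ρ ρ₀ ρ₁ (φ - ψ) = lfun ρ ρ₀ ρ₁ φ - lfun ρ ρ₀ ρ₁ ψ := by
  have h1 : ∫ p, dtFn (φ - ψ) p ∂ρ = (∫ p, dtFn φ p ∂ρ) - ∫ p, dtFn ψ p ∂ρ := by
    rw [← integral_sub (cont_integrable ρ (cont_dtFn hφ)) (cont_integrable ρ (cont_dtFn hψ))]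
    exact integral_congr_ae (Filter.Eventually.of_forall fun p => dtFn_sub hφ hψ p)
  have h2 : ∫ x, (φ - ψ) (1, (x : Euc d)) ∂ρ₁ =
      (∫ x, φ (1, (x : Euc d)) ∂ρ₁) - ∫ x, ψ (1, (x : Euc d)) ∂ρ₁ := by
    rw [← integral_sub (cont_integrable ρ₁ (cont_bdry hφ 1)) (cont_integrable ρ₁ (cont_bdry hψ 1))]
    rfl
  have h3 : ∫ x, (φ - ψ) (0, (x : Euc d)) ∂ρ₀ =
      (∫ x, φ (0, (x : Euc d)) ∂ρ₀) - ∫ x, ψ (0, (x : Euc d)) ∂ρ₀ := by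
    rw [← integral_sub (cont_integrable ρ₀ (cont_bdry hφ 0)) (cont_integrable ρ₀ (cont_bdry hψ 0))]
    rfl
  simp only [lfun, h1, h2, h3]
  ring

lemma lfun_add {φ ψ : ℝ × Euc d → ℝ} (hφ : ContDiff ℝ 1 φ) (hψ : ContDiff ℝ 1 ψ) :
    lfun ρ ρ₀ ρ₁ (φ + ψ) = lfun ρ ρ₀ ρ₁ φ + lfun ρ ρ₀ ρ₁ ψ := by
  have h1 : ∫ p, dtFn (φ + ψ) p ∂ρ = (∫ p, dtFn φ p ∂ρ) + ∫ p, dtFn ψ p ∂ρ := by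
    rw [← integral_add (cont_integrable ρ (cont_dtFn hφ)) (cont_integrable ρ (cont_dtFn hψ))]
    exact integral_congr_ae (Filter.Eventually.of_forall fun p => dtFn_add hφ hψ p)
  have h2 : ∫ x, (φ + ψ) (1, (x : Euc d)) ∂ρ₁ =
      (∫ x, φ (1, (x : Euc d)) ∂ρ₁) + ∫ x, ψ (1, (x : Euc d)) ∂ρ₁ := by
    rw [← integral_add (cont_integrable ρ₁ (cont_bdry hφ 1)) (cont_integrable ρ₁ (cont_bdry hψ 1))]
    rfl
  have h3 : ∫ x, (φ + ψ) (0, (x : Euc d)) ∂ρ₀ =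
      (∫ x, φ (0, (x : Euc d)) ∂ρ₀) + ∫ x, ψ (0, (x : Euc d)) ∂ρ₀ := by
    rw [← integral_add (cont_integrable ρ₀ (cont_bdry hφ 0)) (cont_integrable ρ₀ (cont_bdry hψ 0))]
    rfl
  simp only [lfun, h1, h2, h3]
  ring

lemma lfun_smul (c : ℝ) {φ : ℝ × Euc d → ℝ} (hφ : ContDiff ℝ 1 φ) :
    lfun ρ ρ₀ ρ₁ (c • φ) = c * lfun ρ ρ₀ ρ₁ φ := by
  have h1 : ∫ p, dtFn (c • φ) p ∂ρ = c * ∫ p, dtFn φ p ∂ρ := by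
    rw [← integral_const_mul]
    exact integral_congr_ae (Filter.Eventually.of_forall fun p => dtFn_smul c hφ p)
  have h2 : ∫ x, (c • φ) (1, (x : Euc d)) ∂ρ₁ = c * ∫ x, φ (1, (x : Euc d)) ∂ρ₁ := by
    rw [← integral_const_mul]; rfl
  have h3 : ∫ x, (c • φ) (0, (x : Euc d)) ∂ρ₀ = c * ∫ x, φ (0, (x : Euc d)) ∂ρ₀ := by
    rw [← integral_const_mul]; rfl
  simp only [lfun, h1, h2, h3]
  ring

lemma lfun_neg {φ : ℝ × Euc d → ℝ} (hφ : ContDiff ℝ 1 φ) :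
    lfun ρ ρ₀ ρ₁ (-φ) = - lfun ρ ρ₀ ρ₁ φ := by
  have h : (-φ) = (-1 : ℝ) • φ := by funext x; simp
  rw [h, lfun_smul ρ ρ₀ ρ₁ (-1) hφ]; ring

end lin

section glp
open scoped RealInnerProductSpace
variable {d : ℕ} {Ω : Set (Euc d)} [CompactSpace ↥Ω]
  (ρ : Measure (STt d Ω)) [IsFiniteMeasure ρ]

/-- The gradient of a `C¹` function as an element of `L²(ρ; ℝ^d)`. -/
def Glp {φ : ℝ × Euc d → ℝ} (hφ : ContDiff ℝ 1 φ) : Lp (Euc d) 2 ρ :=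
  (cont_memL2 ρ (cont_gradFn hφ) 2).toLp (gradFn φ)

lemma Glp_coe {φ : ℝ × Euc d → ℝ} (hφ : ContDiff ℝ 1 φ) :
    (Glp ρ hφ : STt d Ω → Euc d) =ᵐ[ρ] gradFn φ :=
  MemLp.coeFn_toLp _

lemma Glp_norm_sq {φ : ℝ × Euc d → ℝ} (hφ : ContDiff ℝ 1 φ) :
    ‖Glp ρ hφ‖ ^ 2 = ∫ p, ‖gradFn φ p‖ ^ 2 ∂ρ := by
  have h := L2.inner_def (𝕜 := ℝ) (Glp ρ hφ) (Glp ρ hφ)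
  rw [real_inner_self_eq_norm_sq] at h
  rw [h]
  refine integral_congr_ae ?_
  filter_upwards [Glp_coe ρ hφ] with p hp
  rw [hp, real_inner_self_eq_norm_sq]

lemma Glp_sub {φ ψ : ℝ × Euc d → ℝ} (hφ : ContDiff ℝ 1 φ) (hψ : ContDiff ℝ 1 ψ) :
    Glp ρ (hφ.sub hψ) = Glp ρ hφ - Glp ρ hψ := by
  rw [Glp, Glp, Glp, ← MemLp.toLp_sub]
  exact MemLp.toLp_congr _ _ (Filter.Eventually.of_forall fun p =>
    congrFun (gradFn_sub (Ω := Ω) hφ hψ) p)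

lemma Glp_add {φ ψ : ℝ × Euc d → ℝ} (hφ : ContDiff ℝ 1 φ) (hψ : ContDiff ℝ 1 ψ) :
    Glp ρ (hφ.add hψ) = Glp ρ hφ + Glp ρ hψ := by
  rw [Glp, Glp, Glp, ← MemLp.toLp_add]
  exact MemLp.toLp_congr _ _ (Filter.Eventually.of_forall fun p =>
    congrFun (gradFn_add (Ω := Ω) hφ hψ) p)

lemma Glp_smul (c : ℝ) {φ : ℝ × Euc d → ℝ} (hφ : ContDiff ℝ 1 φ) :
    Glp ρ (hφ.const_smul c) = c • Glp ρ hφ := by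
  rw [Glp, Glp, ← MemLp.toLp_const_smul]
  exact MemLp.toLp_congr _ _ (Filter.Eventually.of_forall fun p =>
    congrFun (gradFn_smul (Ω := Ω) c hφ) p)

lemma Glp_zero : Glp ρ (contDiff_const (c := (0:ℝ)) : ContDiff ℝ 1 (0 : ℝ × Euc d → ℝ)) = 0 := by
  exact (MemLp.toLp_congr _ (MemLp.zero : MemLp (0 : STt d Ω → Euc d) 2 ρ)
    (Filter.Eventually.of_forall fun p => congrFun (gradFn_zero (Ω := Ω)) p)).trans
    (MemLp.toLp_zero _)

lemma inner_Glp (v : Lp (Euc d) 2 ρ) {φ : ℝ × Euc d → ℝ} (hφ : ContDiff ℝ 1 φ) :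
    ⟪v, Glp ρ hφ⟫ = ∫ p, ⟪(v : STt d Ω → Euc d) p, gradFn φ p⟫ ∂ρ := by
  rw [L2.inner_def]
  refine integral_congr_ae ?_
  filter_upwards [Glp_coe ρ hφ] with p hp
  rw [hp]

end glp

section density
variable {X : Type*} [MeasurableSpace X] (μ : Measure X) [IsFiniteMeasure μ]

lemma fin_withDensity {w : X → ℝ} (hw : Integrable w μ) :
    IsFiniteMeasure (μ.withDensity fun x => ENNReal.ofReal (w x)) := by
  refine isFiniteMeasure_withDensity (ne_of_lt (lt_of_le_of_lt ?_ hw.2))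
  refine lintegral_mono fun x => ?_
  rw [Real.enorm_eq_ofReal_abs]
  exact ENNReal.ofReal_le_ofReal (le_abs_self _)

lemma singular_withDensity {w : X → ℝ} (hwm : Measurable w) :
    (μ.withDensity fun x => ENNReal.ofReal (w x)) ⟂ₘ
      (μ.withDensity fun x => ENNReal.ofReal (-(w x))) := by
  refine ⟨{x | w x ≤ 0}, measurableSet_le hwm measurable_const, ?_, ?_⟩
  · rw [withDensity_apply _ (measurableSet_le hwm measurable_const)]
    rw [setLIntegral_congr_fun (measurableSet_le hwm measurable_const)
      (fun x hx => ENNReal.ofReal_eq_zero.mpr hx)]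
    simp
  · rw [withDensity_apply _ (measurableSet_le hwm measurable_const).compl]
    rw [setLIntegral_congr_fun (measurableSet_le hwm measurable_const).compl
      (fun x hx => ENNReal.ofReal_eq_zero.mpr (by
        simp only [Set.mem_compl_iff, Set.mem_setOf_eq, not_le] at hx; linarith))]
    simp

/-- The signed measure `w · μ`. -/
def densSM {w : X → ℝ} (hw : Integrable w μ) : SignedMeasure X :=
  letI : IsFiniteMeasure (μ.withDensity fun x => ENNReal.ofReal (w x)) := fin_withDensity μ hw
  letI : IsFiniteMeasure (μ.withDensity fun x => ENNReal.ofReal (-(w x))) :=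
    fin_withDensity μ hw.neg
  (μ.withDensity fun x => ENNReal.ofReal (w x)).toSignedMeasure -
    (μ.withDensity fun x => ENNReal.ofReal (-(w x))).toSignedMeasure

lemma sInt_densSM {w : X → ℝ} (hw : Integrable w μ) (hwm : Measurable w)
    {f : X → ℝ} (hfm : AEStronglyMeasurable f μ) (hfb : ∃ C, ∀ x, ‖f x‖ ≤ C) :
    sInt (densSM μ hw) f = ∫ x, f x * w x ∂μ := by
  haveI h1 : IsFiniteMeasure (μ.withDensity fun x => ENNReal.ofReal (w x)) :=
    fin_withDensity μ hw
  haveI h2 : IsFiniteMeasure (μ.withDensity fun x => ENNReal.ofReal (-(w x))) :=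
    fin_withDensity μ hw.neg
  have hrfl : densSM μ hw =
      (μ.withDensity fun x => ENNReal.ofReal (w x)).toSignedMeasure -
        (μ.withDensity fun x => ENNReal.ofReal (-(w x))).toSignedMeasure := rfl
  rw [hrfl, sInt_sub_singular _ _ (singular_withDensity μ hwm) f]
  have e1 : ∫ x, f x ∂(μ.withDensity fun x => ENNReal.ofReal (w x)) =
      ∫ x, Real.toNNReal (w x) • f x ∂μ :=
    integral_withDensity_eq_integral_smul hwm.real_toNNReal f
  have e2 : ∫ x, f x ∂(μ.withDensity fun x => ENNReal.ofReal (-(w x))) =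
      ∫ x, Real.toNNReal (-(w x)) • f x ∂μ :=
    integral_withDensity_eq_integral_smul hwm.neg.real_toNNReal f
  rw [e1, e2]
  obtain ⟨C, hC⟩ := hfb
  have i1 : Integrable (fun x => Real.toNNReal (w x) • f x) μ :=
    (Integrable.bdd_mul hw.pos_part hfm (Filter.Eventually.of_forall hC)).congr
      (Filter.Eventually.of_forall fun x => by
        simp [NNReal.smul_def, Real.coe_toNNReal', smul_eq_mul]; ring)
  have i2 : Integrable (fun x => Real.toNNReal (-(w x)) • f x) μ :=
    (Integrable.bdd_mul hw.neg.pos_part hfm (Filter.Eventually.of_forall hC)).congr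
      (Filter.Eventually.of_forall fun x => by
        simp [NNReal.smul_def, Real.coe_toNNReal', smul_eq_mul]; ring)
  rw [← integral_sub i1 i2]
  refine integral_congr_ae (Filter.Eventually.of_forall fun x => ?_)
  simp only [NNReal.smul_def, Real.coe_toNNReal', smul_eq_mul]
  rw [show max (w x) 0 * f x - max (-w x) 0 * f x = (max (w x) 0 - max (-w x) 0) * f x by ring,
    max_zero_sub_max_neg_zero_eq_self]
  ring

end density

lemma contDiff_smul' {d : ℕ} (c : ℝ) {φ : ℝ × Euc d → ℝ} (hφ : ContDiff ℝ 1 φ) :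
    ContDiff ℝ 1 (c • φ) := by exact hφ.const_smul c

lemma contDiff_sub' {d : ℕ} {φ ψ : ℝ × Euc d → ℝ} (hφ : ContDiff ℝ 1 φ)
    (hψ : ContDiff ℝ 1 ψ) : ContDiff ℝ 1 (φ - ψ) := by exact hφ.sub hψ

lemma contDiff_add' {d : ℕ} {φ ψ : ℝ × Euc d → ℝ} (hφ : ContDiff ℝ 1 φ)
    (hψ : ContDiff ℝ 1 ψ) : ContDiff ℝ 1 (φ + ψ) := by exact hφ.add hψ

lemma euc_abs_coord_le {d : ℕ} (x : Euc d) (i : Fin d) : |x i| ≤ ‖x‖ := by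
  rw [EuclideanSpace.norm_eq, show |x i| = Real.sqrt ((x i) ^ 2) from (Real.sqrt_sq_eq_abs _).symm]
  apply Real.sqrt_le_sqrt
  have h := Finset.single_le_sum (f := fun j => ‖x j‖ ^ 2)
    (fun j _ => by positivity) (Finset.mem_univ i)
  simpa [Real.norm_eq_abs, sq_abs] using h

section strong
open scoped RealInnerProductSpace

set_option maxHeartbeats 2000000 in
lemma strong_dir {d : ℕ} {Ω : Set (Euc d)} [CompactSpace ↥Ω]
    (ρ : Measure (STt d Ω)) [IsFiniteMeasure ρ]
    (ρ₀ ρ₁ : Measure ↥Ω) [IsFiniteMeasure ρ₀] [IsFiniteMeasure ρ₁] :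
    (⨅ (m : Fin d → SignedMeasure (STt d Ω))
        (_ : CEeq d Ω ρ₀.toSignedMeasure ρ₁.toSignedMeasure ρ.toSignedMeasure m),
        actionBB ρ.toSignedMeasure m) ≤
      ⨆ φ : {φ : ℝ × Euc d → ℝ // ContDiff ℝ 1 φ},
        ENNReal.ofReal (lfun ρ ρ₀ ρ₁ φ.1 - (∫ p, ‖gradFn φ.1 p‖ ^ 2 ∂ρ) / 2) := by
  set X := STt d Ω
  set SR := ⨆ φ : {φ : ℝ × Euc d → ℝ // ContDiff ℝ 1 φ},
      ENNReal.ofReal (lfun ρ ρ₀ ρ₁ φ.1 - (∫ p, ‖gradFn φ.1 p‖ ^ 2 ∂ρ) / 2) with hSRdef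
  by_cases htop : SR = ⊤
  · rw [htop]; exact le_top
  set S := SR.toReal with hSdef
  have hS0 : 0 ≤ S := ENNReal.toReal_nonneg
  -- the key dual bound
  have hkey : ∀ φ : ℝ × Euc d → ℝ, ∀ hφ : ContDiff ℝ 1 φ,
      lfun ρ ρ₀ ρ₁ φ - ‖Glp ρ hφ‖ ^ 2 / 2 ≤ S := by
    intro φ hφ
    have h1 : ENNReal.ofReal (lfun ρ ρ₀ ρ₁ φ - (∫ p, ‖gradFn φ p‖ ^ 2 ∂ρ) / 2) ≤ SR :=
      le_iSup (fun ψ : {φ : ℝ × Euc d → ℝ // ContDiff ℝ 1 φ} =>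
        ENNReal.ofReal (lfun ρ ρ₀ ρ₁ ψ.1 - (∫ p, ‖gradFn ψ.1 p‖ ^ 2 ∂ρ) / 2)) ⟨φ, hφ⟩
    rw [Glp_norm_sq]
    rcases le_or_gt (lfun ρ ρ₀ ρ₁ φ - (∫ p, ‖gradFn φ p‖ ^ 2 ∂ρ) / 2) 0 with h | h
    · exact h.trans hS0
    · have h2 := ENNReal.toReal_mono htop h1
      rwa [ENNReal.toReal_ofReal h.le] at h2
  -- nonpositivity helper
  have haux : ∀ l : ℝ, (∀ c : ℝ, 0 < c → c * l ≤ S) → l ≤ 0 := by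
    intro l hl
    by_contra hpos
    push_neg at hpos
    have h1 := hl ((S + 1) / l) (div_pos (by linarith) hpos)
    rw [div_mul_cancel₀ _ (ne_of_gt hpos)] at h1
    linarith
  -- vanishing gradient forces vanishing linear part
  have hnorm0 : ∀ φ : ℝ × Euc d → ℝ, ∀ hφ : ContDiff ℝ 1 φ,
      ‖Glp ρ hφ‖ = 0 → lfun ρ ρ₀ ρ₁ φ = 0 := by
    intro φ hφ hG
    have hside : ∀ ψ : ℝ × Euc d → ℝ, ∀ hψ : ContDiff ℝ 1 ψ,
        ‖Glp ρ hψ‖ = 0 → lfun ρ ρ₀ ρ₁ ψ ≤ 0 := by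
      intro ψ hψ hGψ
      refine haux _ fun c hc => ?_
      have h := hkey (c • ψ) (contDiff_smul' c hψ)
      rw [lfun_smul ρ ρ₀ ρ₁ c hψ, Glp_smul ρ c hψ, norm_smul, hGψ, mul_zero] at h
      simpa using h
    have h1 := hside φ hφ hG
    have h2 := hside ((-1 : ℝ) • φ) (contDiff_smul' (-1) hφ) (by
      rw [Glp_smul ρ (-1) hφ, norm_smul, hG, mul_zero])
    rw [lfun_smul ρ ρ₀ ρ₁ (-1) hφ] at h2
    linarith
  -- the fundamental norm bound
  have hbnd : ∀ φ : ℝ × Euc d → ℝ, ∀ hφ : ContDiff ℝ 1 φ,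
      lfun ρ ρ₀ ρ₁ φ ≤ Real.sqrt (2 * S) * ‖Glp ρ hφ‖ := by
    intro φ hφ
    set N := ‖Glp ρ hφ‖ with hNdef
    have hN0 : 0 ≤ N := norm_nonneg _
    rcases eq_or_lt_of_le hN0 with hN | hN
    · rw [← hN, mul_zero]
      exact le_of_eq (hnorm0 φ hφ hN.symm)
    · rcases eq_or_lt_of_le hS0 with hS' | hS'
      · -- S = 0
        have hle : lfun ρ ρ₀ ρ₁ φ ≤ 0 := by
          refine le_of_forall_pos_le_add fun ε hε => ?_
          have h := hkey ((2 * ε / N ^ 2) • φ) (contDiff_smul' _ hφ)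
          have hc : 0 < 2 * ε / N ^ 2 := by positivity
          rw [lfun_smul ρ ρ₀ ρ₁ _ hφ, Glp_smul ρ _ hφ, norm_smul,
            Real.norm_of_nonneg hc.le, ← hNdef] at h
          have hNne : N ≠ 0 := ne_of_gt hN
          have hsq : (2 * ε / N ^ 2 * N) ^ 2 / 2 = 2 * ε / N ^ 2 * ε := by
            field_simp
          have h3 : 2 * ε / N ^ 2 * lfun ρ ρ₀ ρ₁ φ ≤ 2 * ε / N ^ 2 * ε := by
            linarith [h, hsq]
          have h4 : lfun ρ ρ₀ ρ₁ φ ≤ ε := le_of_mul_le_mul_left h3 hc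
          linarith
        rw [← hS']
        simpa using hle
      · -- S > 0
        set c := Real.sqrt (2 * S) / N with hcdef
        have hc : 0 < c := div_pos (Real.sqrt_pos.mpr (by linarith)) hN
        have h := hkey (c • φ) (contDiff_smul' c hφ)
        rw [lfun_smul ρ ρ₀ ρ₁ c hφ, Glp_smul ρ c hφ, norm_smul,
          Real.norm_of_nonneg hc.le, ← hNdef] at h
        have hNne : N ≠ 0 := ne_of_gt hN
        have h2S : (0:ℝ) ≤ 2 * S := by linarith
        have hcn : c * N = Real.sqrt (2 * S) := by
          rw [hcdef, div_mul_cancel₀ _ hNne]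
        have hsq : (c * N) ^ 2 / 2 = S := by
          rw [hcn, Real.sq_sqrt h2S]; ring
        have hmul : c * (Real.sqrt (2 * S) * N) = 2 * S := by
          rw [show c * (Real.sqrt (2 * S) * N) = Real.sqrt (2 * S) * (c * N) by ring, hcn,
            Real.mul_self_sqrt h2S]
        have h3 : c * lfun ρ ρ₀ ρ₁ φ ≤ c * (Real.sqrt (2 * S) * N) := by
          linarith [h, hsq, hmul]
        exact le_of_mul_le_mul_left h3 hc
  -- subspace of gradients in L²(ρ; ℝ^d)
  let Gsub : Submodule ℝ (Lp (Euc d) 2 ρ) :=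
    { carrier := {g | ∃ φ : ℝ × Euc d → ℝ, ∃ hφ : ContDiff ℝ 1 φ, Glp ρ hφ = g}
      add_mem' := by
        rintro g h ⟨φ, hφ, rfl⟩ ⟨ψ, hψ, rfl⟩
        exact ⟨φ + ψ, contDiff_add' hφ hψ, Glp_add ρ hφ hψ⟩
      zero_mem' := ⟨0, contDiff_const, Glp_zero ρ⟩
      smul_mem' := by
        rintro c g ⟨φ, hφ, rfl⟩
        exact ⟨c • φ, contDiff_smul' c hφ, Glp_smul ρ c hφ⟩ }
  have hwd : ∀ (φ ψ : ℝ × Euc d → ℝ) (hφ : ContDiff ℝ 1 φ) (hψ : ContDiff ℝ 1 ψ),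
      Glp ρ hφ = Glp ρ hψ → lfun ρ ρ₀ ρ₁ φ = lfun ρ ρ₀ ρ₁ ψ := by
    intro φ ψ hφ hψ hG
    have h0 : ‖Glp ρ (contDiff_sub' hφ hψ)‖ = 0 := by
      rw [show Glp ρ (contDiff_sub' hφ hψ) = Glp ρ hφ - Glp ρ hψ from Glp_sub ρ hφ hψ, hG,
        sub_self, norm_zero]
    have h1 := hnorm0 (φ - ψ) (contDiff_sub' hφ hψ) h0
    rw [lfun_sub ρ ρ₀ ρ₁ hφ hψ] at h1
    linarith
  have pick : ∀ g : Gsub, ∃ φ : ℝ × Euc d → ℝ, ∃ hφ : ContDiff ℝ 1 φ, Glp ρ hφ = g.1 :=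
    fun g => g.2
  let F0 : Gsub →ₗ[ℝ] ℝ :=
    { toFun := fun g => lfun ρ ρ₀ ρ₁ (pick g).choose
      map_add' := by
        intro g h
        have e1 : Glp ρ (pick (g + h)).choose_spec.choose = g.1 + h.1 :=
          (pick (g + h)).choose_spec.choose_spec
        have e2 : Glp ρ (pick g).choose_spec.choose = g.1 := (pick g).choose_spec.choose_spec
        have e3 : Glp ρ (pick h).choose_spec.choose = h.1 := (pick h).choose_spec.choose_spec
        have e4 : Glp ρ (contDiff_add' (pick g).choose_spec.choose
            (pick h).choose_spec.choose) = g.1 + h.1 := by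
          rw [show Glp ρ (contDiff_add' (pick g).choose_spec.choose
            (pick h).choose_spec.choose) = Glp ρ (pick g).choose_spec.choose +
              Glp ρ (pick h).choose_spec.choose from
            Glp_add ρ (pick g).choose_spec.choose (pick h).choose_spec.choose, e2, e3]
        have h5 := hwd _ _ (pick (g + h)).choose_spec.choose
          (contDiff_add' (pick g).choose_spec.choose (pick h).choose_spec.choose)
          (by rw [e1, e4])
        simp only [h5]
        exact lfun_add ρ ρ₀ ρ₁ (pick g).choose_spec.choose (pick h).choose_spec.choose
      map_smul' := by
        intro c g
        have e1 : Glp ρ (pick (c • g)).choose_spec.choose = c • g.1 :=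
          (pick (c • g)).choose_spec.choose_spec
        have e2 : Glp ρ (pick g).choose_spec.choose = g.1 := (pick g).choose_spec.choose_spec
        have e4 : Glp ρ (contDiff_smul' c (pick g).choose_spec.choose) = c • g.1 := by
          rw [show Glp ρ (contDiff_smul' c (pick g).choose_spec.choose) =
            c • Glp ρ (pick g).choose_spec.choose from
            Glp_smul ρ c (pick g).choose_spec.choose, e2]
        have h5 := hwd _ _ (pick (c • g)).choose_spec.choose
          (contDiff_smul' c (pick g).choose_spec.choose) (by rw [e1, e4])
        simp only [h5, RingHom.id_apply]
        exact lfun_smul ρ ρ₀ ρ₁ c (pick g).choose_spec.choose }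
  have hFbound : ∀ g : Gsub, ‖F0 g‖ ≤ Real.sqrt (2 * S) * ‖g‖ := by
    intro g
    have e2 : Glp ρ (pick g).choose_spec.choose = g.1 := (pick g).choose_spec.choose_spec
    have hup : lfun ρ ρ₀ ρ₁ (pick g).choose ≤ Real.sqrt (2 * S) * ‖g‖ := by
      have h := hbnd (pick g).choose (pick g).choose_spec.choose
      rwa [e2, ← Submodule.coe_norm] at h
    have hlow : -(Real.sqrt (2 * S) * ‖g‖) ≤ lfun ρ ρ₀ ρ₁ (pick g).choose := by
      have h := hbnd ((-1 : ℝ) • (pick g).choose)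
        (contDiff_smul' (-1) (pick g).choose_spec.choose)
      rw [show Glp ρ (contDiff_smul' (-1) (pick g).choose_spec.choose) =
          (-1 : ℝ) • Glp ρ (pick g).choose_spec.choose from
          Glp_smul ρ (-1) (pick g).choose_spec.choose, e2,
        lfun_smul ρ ρ₀ ρ₁ (-1) (pick g).choose_spec.choose, norm_smul] at h
      simp only [norm_neg, norm_one, one_mul, neg_mul] at h
      rw [← Submodule.coe_norm] at h
      linarith
    rw [Real.norm_eq_abs, abs_le]
    exact ⟨hlow, hup⟩
  let F : Gsub →L[ℝ] ℝ := LinearMap.mkContinuous F0 (Real.sqrt (2 * S)) hFbound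
  obtain ⟨f, hfext, hfnorm⟩ := exists_extension_norm_eq Gsub F
  have hFnorm : ‖F‖ ≤ Real.sqrt (2 * S) :=
    LinearMap.mkContinuous_norm_le F0 (Real.sqrt_nonneg _) hFbound
  have hfle : ‖f‖ ≤ Real.sqrt (2 * S) := hfnorm ▸ hFnorm
  set v := (InnerProductSpace.toDual ℝ (Lp (Euc d) 2 ρ)).symm f with hvdef
  have hvnorm : ‖v‖ ≤ Real.sqrt (2 * S) := by
    rw [hvdef, LinearIsometryEquiv.norm_map]; exact hfle
  have hvinner : ∀ (φ : ℝ × Euc d → ℝ) (hφ : ContDiff ℝ 1 φ),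
      ∫ p, ⟪(v : STt d Ω → Euc d) p, gradFn φ p⟫ ∂ρ = lfun ρ ρ₀ ρ₁ φ := by
    intro φ hφ
    have hmem : Glp ρ hφ ∈ Gsub := ⟨φ, hφ, rfl⟩
    have h1 : ⟪v, Glp ρ hφ⟫ = f (Glp ρ hφ) := InnerProductSpace.toDual_symm_apply
    have h2 : f (Glp ρ hφ) = F0 ⟨Glp ρ hφ, hmem⟩ := hfext ⟨Glp ρ hφ, hmem⟩
    have h3 : F0 ⟨Glp ρ hφ, hmem⟩ = lfun ρ ρ₀ ρ₁ φ :=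
      hwd _ φ (pick ⟨Glp ρ hφ, hmem⟩).choose_spec.choose hφ
        (pick ⟨Glp ρ hφ, hmem⟩).choose_spec.choose_spec
    rw [← inner_Glp ρ v hφ, h1, h2, h3]
  -- the momentum vector measure
  have hw2 : MemLp (⇑v) 2 ρ := Lp.memLp v
  have hwsm : StronglyMeasurable (⇑v) := Lp.stronglyMeasurable v
  have hwim : ∀ i : Fin d, Measurable fun x : STt d Ω => (v : STt d Ω → Euc d) x i := fun i =>
    ((EuclideanSpace.proj (𝕜 := ℝ) i).continuous.comp_stronglyMeasurable hwsm).measurable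
  have hwimem : ∀ i : Fin d, MemLp (fun x : STt d Ω => (v : STt d Ω → Euc d) x i) 2 ρ :=
    fun i => hw2.norm.mono
      ((EuclideanSpace.proj (𝕜 := ℝ) i).continuous.comp_stronglyMeasurable
        hwsm).aestronglyMeasurable
      (Filter.Eventually.of_forall fun x => by
        simpa [Real.norm_eq_abs] using euc_abs_coord_le ((v : STt d Ω → Euc d) x) i)
  have hwint : ∀ i : Fin d, Integrable (fun x : STt d Ω => (v : STt d Ω → Euc d) x i) ρ :=
    fun i => (hwimem i).integrable one_le_two
  set mm : Fin d → SignedMeasure (STt d Ω) := fun i => densSM ρ (hwint i) with hmmdef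
  have hsInt_m : ∀ (i : Fin d) (g : STt d Ω → ℝ), Continuous g →
      sInt (mm i) g = ∫ x, g x * (v : STt d Ω → Euc d) x i ∂ρ := by
    intro i g hg
    refine sInt_densSM ρ (hwint i) (hwim i) hg.aestronglyMeasurable ?_
    obtain ⟨C, hC⟩ := isCompact_univ.exists_bound_of_continuousOn hg.continuousOn
    exact ⟨C, fun x => hC x trivial⟩
  -- integrability of coordinate products
  have hprod_int : ∀ (i : Fin d) (g : STt d Ω → ℝ), Continuous g →
      Integrable (fun x => g x * (v : STt d Ω → Euc d) x i) ρ := by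
    intro i g hg
    obtain ⟨C, hC⟩ := isCompact_univ.exists_bound_of_continuousOn hg.continuousOn
    exact (hwint i).bdd_mul hg.aestronglyMeasurable (Filter.Eventually.of_forall fun x => hC x trivial)
  -- the L² norm of v as an integral
  have hnv2 : ∫ x, ‖(v : STt d Ω → Euc d) x‖ ^ 2 ∂ρ = ‖v‖ ^ 2 := by
    have h := L2.inner_def (𝕜 := ℝ) v v
    rw [real_inner_self_eq_norm_sq] at h
    rw [h]
    exact integral_congr_ae (Filter.Eventually.of_forall fun p =>
      (real_inner_self_eq_norm_sq _).symm)
  -- continuity equation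
  have hCE : CEeq d Ω ρ₀.toSignedMeasure ρ₁.toSignedMeasure ρ.toSignedMeasure mm := by
    intro ψ hψ
    rw [sInt_toSignedMeasure, sInt_toSignedMeasure, sInt_toSignedMeasure]
    have h1 : Continuous (fderiv ℝ ψ) := hψ.continuous_fderiv one_ne_zero
    have hterm : ∀ i : Fin d,
        sInt (mm i) (fun p => fderiv ℝ ψ (STemb p) (0, EuclideanSpace.single i 1)) =
        ∫ x, gradFn ψ x i * (v : STt d Ω → Euc d) x i ∂ρ := fun i =>
      hsInt_m i _ ((h1.comp continuous_STemb).clm_apply continuous_const)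
    have hib : ∀ i : Fin d, Integrable
        (fun x => gradFn ψ x i * (v : STt d Ω → Euc d) x i) ρ := fun i =>
      hprod_int i (fun x => gradFn ψ x i)
        (by exact (h1.comp continuous_STemb).clm_apply continuous_const)
    have hsum : ∑ i, ∫ x, gradFn ψ x i * (v : STt d Ω → Euc d) x i ∂ρ =
        ∫ x, ⟪(v : STt d Ω → Euc d) x, gradFn ψ x⟫ ∂ρ := by
      rw [← integral_finset_sum _ (fun i _ => hib i)]
      refine integral_congr_ae (Filter.Eventually.of_forall fun x => ?_)
      simp only [PiLp.inner_apply, RCLike.inner_apply, conj_trivial]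
    have hfinal := hvinner ψ hψ
    rw [← hsum] at hfinal
    rw [show (∑ i, sInt (mm i) fun p => fderiv ℝ ψ (STemb p) (0, EuclideanSpace.single i 1)) =
        ∑ i, ∫ x, gradFn ψ x i * (v : STt d Ω → Euc d) x i ∂ρ from
      Finset.sum_congr rfl fun i _ => hterm i, hfinal, lfun]
    have hdt : ∫ p, dtFn ψ p ∂ρ = ∫ p, fderiv ℝ ψ (STemb p) (1, 0) ∂ρ := rfl
    linarith [hdt]
  -- action bound
  have hact : actionBB ρ.toSignedMeasure mm ≤ SR := by
    refine iSup_le ?_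
    rintro ⟨⟨a, b⟩, hab⟩
    simp only
    have hA : sInt ρ.toSignedMeasure (fun x => a x) = ∫ x, a x ∂ρ :=
      sInt_toSignedMeasure ρ _
    have hB : vInt mm (fun x => b x) =
        ∑ i, ∫ x, b x i * (v : STt d Ω → Euc d) x i ∂ρ := by
      rw [vInt]
      exact Finset.sum_congr rfl fun i _ => hsInt_m i _
        ((EuclideanSpace.proj (𝕜 := ℝ) i).continuous.comp b.continuous)
    have hint_a : Integrable (fun x => a x) ρ := cont_integrable ρ a.continuous
    have hint_b : ∀ i : Fin d, Integrable
        (fun x => b x i * (v : STt d Ω → Euc d) x i) ρ := fun i =>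
      hprod_int i _ ((EuclideanSpace.proj (𝕜 := ℝ) i).continuous.comp b.continuous)
    have hval : sInt ρ.toSignedMeasure (fun x => a x) + vInt mm (fun x => b x) =
        ∫ x, (a x + ∑ i, b x i * (v : STt d Ω → Euc d) x i) ∂ρ := by
      rw [hA, hB, ← integral_finset_sum _ (fun i _ => hint_b i),
        ← integral_add hint_a (integrable_finset_sum _ (fun i _ => hint_b i))]
    have hintv2 : Integrable (fun x => ‖(v : STt d Ω → Euc d) x‖ ^ 2) ρ :=
      hw2.norm.integrable_sq
    have hmono : ∫ x, (a x + ∑ i, b x i * (v : STt d Ω → Euc d) x i) ∂ρ ≤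
        ∫ x, ‖(v : STt d Ω → Euc d) x‖ ^ 2 / 2 ∂ρ := by
      refine integral_mono (hint_a.add (integrable_finset_sum _ (fun i _ => hint_b i)))
        (hintv2.div_const 2) fun x => ?_
      have h2 : ∑ i, b x i * (v : STt d Ω → Euc d) x i =
          ⟪b x, (v : STt d Ω → Euc d) x⟫ := by
        simp only [PiLp.inner_apply, RCLike.inner_apply, conj_trivial]
        exact Finset.sum_congr rfl fun i _ => mul_comm _ _
      have h3 : ⟪b x, (v : STt d Ω → Euc d) x⟫ ≤ ‖b x‖ * ‖(v : STt d Ω → Euc d) x‖ :=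
        real_inner_le_norm _ _
      have h4 : a x + ‖b x‖ ^ 2 / 2 ≤ 0 := hab x
      have h5 : ‖b x‖ * ‖(v : STt d Ω → Euc d) x‖ ≤
          (‖b x‖ ^ 2 + ‖(v : STt d Ω → Euc d) x‖ ^ 2) / 2 := by
        nlinarith [sq_nonneg (‖b x‖ - ‖(v : STt d Ω → Euc d) x‖)]
      simp only [h2]
      linarith
    have hS2 : ∫ x, ‖(v : STt d Ω → Euc d) x‖ ^ 2 / 2 ∂ρ ≤ S := by
      rw [integral_div, hnv2]
      have : ‖v‖ ^ 2 ≤ Real.sqrt (2 * S) ^ 2 :=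
        pow_le_pow_left₀ (norm_nonneg _) hvnorm 2
      rw [Real.sq_sqrt (by linarith : (0:ℝ) ≤ 2 * S)] at this
      linarith
    calc ENNReal.ofReal (sInt ρ.toSignedMeasure (fun x => a x) + vInt mm (fun x => b x))
        ≤ ENNReal.ofReal S := ENNReal.ofReal_le_ofReal (by rw [hval]; linarith [hmono, hS2])
      _ = SR := ENNReal.ofReal_toReal htop
  exact le_trans (iInf₂_le mm hCE) hact
end strong

/-- Dual formulation of the minimal action over momenta satisfying the continuity equation:
`A_{ρ₀,ρ₁}(ρ) = sup_φ (⟨ρ₁,φ(1,·)⟩ − ⟨ρ₀,φ(0,·)⟩ − ⟨⟨ρ, ∂ₜφ + |∇ₓφ|²/2⟩⟩)`,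
the supremum being over all C¹ functions `φ` on `[0,1]×Ω`. -/
theorem stmt9 {d : ℕ} (hd : 1 ≤ d) (Ω : Set (Euc d)) (hne : Ω.Nonempty)
    (hcomp : IsCompact Ω) (hconv : Convex ℝ Ω)
    (ρ : Measure (STt d Ω)) [IsFiniteMeasure ρ]
    (ρ₀ ρ₁ : Measure ↥Ω) [IsFiniteMeasure ρ₀] [IsFiniteMeasure ρ₁] :
    (⨅ (m : Fin d → SignedMeasure (STt d Ω))
        (_ : CEeq d Ω ρ₀.toSignedMeasure ρ₁.toSignedMeasure ρ.toSignedMeasure m),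
        actionBB ρ.toSignedMeasure m) =
      ⨆ φ : {φ : ℝ × Euc d → ℝ // ContDiff ℝ 1 φ},
        ENNReal.ofReal ((∫ x, (φ : ℝ × Euc d → ℝ) (1, (x : Euc d)) ∂ρ₁) -
          (∫ x, (φ : ℝ × Euc d → ℝ) (0, (x : Euc d)) ∂ρ₀) -
          ∫ p, (fderiv ℝ (φ : ℝ × Euc d → ℝ) (STemb p) (1, 0) +
            (∑ i, (fderiv ℝ (φ : ℝ × Euc d → ℝ) (STemb p) (0, EuclideanSpace.single i 1)) ^ 2) / 2) ∂ρ) := by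
  haveI : CompactSpace ↥Ω := isCompact_iff_compactSpace.mp hcomp
  refine le_antisymm ?_ (iSup_le fun φ => le_iInf fun m => le_iInf fun hm =>
    weak_dir ρ ρ₀ ρ₁ φ.1 φ.2 m hm)
  refine le_trans (strong_dir ρ ρ₀ ρ₁) (le_of_eq (iSup_congr fun φ => ?_))
  obtain ⟨φ, hφ⟩ := φ
  congr 1
  have hsum : Continuous (fun p : STt d Ω =>
      ∑ i, (fderiv ℝ φ (STemb p) (0, EuclideanSpace.single i 1)) ^ 2) := by
    have h1 : Continuous (fderiv ℝ φ) := hφ.continuous_fderiv one_ne_zero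
    exact continuous_finset_sum _ fun i _ =>
      ((h1.comp continuous_STemb).clm_apply continuous_const).pow 2
  have hint_dt : Integrable (fun p : STt d Ω => fderiv ℝ φ (STemb p) (1, 0)) ρ :=
    cont_integrable ρ (cont_dtFn hφ)
  have hint_sum : Integrable (fun p : STt d Ω =>
      ∑ i, (fderiv ℝ φ (STemb p) (0, EuclideanSpace.single i 1)) ^ 2) ρ :=
    cont_integrable ρ hsum
  have hsplit : ∫ p, (fderiv ℝ φ (STemb p) (1, 0) +
        (∑ i, (fderiv ℝ φ (STemb p) (0, EuclideanSpace.single i 1)) ^ 2) / 2) ∂ρ =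
      (∫ p, fderiv ℝ φ (STemb p) (1, 0) ∂ρ) +
      (∫ p, (fun p : STt d Ω =>
        ∑ i, (fderiv ℝ φ (STemb p) (0, EuclideanSpace.single i 1)) ^ 2) p ∂ρ) / 2 := by
    rw [← integral_div, ← integral_add hint_dt (hint_sum.div_const 2)]
  have hng : ∫ p, ‖gradFn φ p‖ ^ 2 ∂ρ = ∫ p, (fun p : STt d Ω =>
      ∑ i, (fderiv ℝ φ (STemb p) (0, EuclideanSpace.single i 1)) ^ 2) p ∂ρ :=
    integral_congr_ae (Filter.Eventually.of_forall fun p => norm_gradFn_sq φ p)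
  have hdt : ∫ p, dtFn φ p ∂ρ = ∫ p, fderiv ℝ φ (STemb p) (1, 0) ∂ρ := rfl
  rw [lfun, hsplit, hng, hdt]
  ring

end
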